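/- Let k ∈ ℂ with k ≠ 0 and φ : ℝ>0 × ℝ≥0 → V continuous satisfying the cocycle relation (C_k). Then there exists a unique v ∈ V such that φ(λ, 0) = (λ^{-k} − 1) v for all λ > 0. -/
import Mathlib


open Set

lemma stmt6_cpow (k : ℂ) {l : ℝ} (hl : 0 < l) :
    (l : ℂ) ^ (-k) = Complex.exp (-k * Real.log l) := by
  rw [Complex.cpow_def_of_ne_zero (by exact_mod_cast hl.ne')]
  rw [← Complex.ofReal_log hl.le, mul_comm]

/-- For `k ≠ 0` and `φ` continuous satisfying `(C_k)`, there is a unique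
`v ∈ V` with `φ(λ, 0) = (λ^{-k} − 1) • v` for all `λ > 0`. -/
theorem stmt6 {V : Type*} [NormedAddCommGroup V] [NormedSpace ℂ V]
    [FiniteDimensional ℂ V] (k : ℂ) (hk : k ≠ 0) (φ : ℝ → ℝ → V)
    (hcont : ContinuousOn (fun p : ℝ × ℝ => φ p.1 p.2) (Ioi 0 ×ˢ Ici 0))
    (hcoc : ∀ l₁ > (0 : ℝ), ∀ l₂ > (0 : ℝ), ∀ t ≥ (0 : ℝ),
      φ (l₁ * l₂) t = ((l₂ : ℂ) ^ (-k)) • φ l₁ (t * l₂) + φ l₂ t) :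
    ∃! v : V, ∀ l > (0 : ℝ), φ l 0 = (((l : ℂ) ^ (-k)) - 1) • v := by
  set g : ℝ → V := fun l => φ l 0 with hg
  have hG : ∀ l₁ > (0:ℝ), ∀ l₂ > (0:ℝ),
      g (l₁ * l₂) = ((l₂ : ℂ) ^ (-k)) • g l₁ + g l₂ := by
    intro l₁ h1 l₂ h2
    simpa using hcoc l₁ h1 l₂ h2 0 le_rfl
  have hg1 : g 1 = 0 := by
    have := hG 1 one_pos 1 one_pos
    simp only [mul_one, Complex.ofReal_one, Complex.one_cpow, one_smul] at this
    have : g 1 + g 1 = g 1 := this.symm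
    simpa using this
  -- symmetry relation
  have hsym : ∀ l₁ > (0:ℝ), ∀ l₂ > (0:ℝ),
      (((l₂:ℂ)^(-k)) - 1) • g l₁ = (((l₁:ℂ)^(-k)) - 1) • g l₂ := by
    intro l₁ h1 l₂ h2
    have e1 := hG l₁ h1 l₂ h2
    have e2 := hG l₂ h2 l₁ h1
    rw [mul_comm] at e2
    rw [e2] at e1
    rw [sub_smul, sub_smul, one_smul, one_smul, sub_eq_sub_iff_add_eq_add]
    linear_combination (norm := abel) e1.symm
  -- vanishing at powers
  have key : ∀ (m : ℕ), 0 < m → ∀ l > (0:ℝ),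
      -k * (Real.log l : ℂ) = (m : ℂ) * (2 * Real.pi * Complex.I) → g l = 0 := by
    intro m hm l hl hlog
    set t : ℝ := l ^ ((m:ℝ)⁻¹) with ht
    have htpos : 0 < t := Real.rpow_pos_of_pos hl _
    have hmR : (m:ℝ) ≠ 0 := Nat.cast_ne_zero.mpr hm.ne'
    have hlogt : Real.log t = (m:ℝ)⁻¹ * Real.log l := by
      rw [ht, Real.log_rpow hl]
    have hklogt : -k * (Real.log t : ℂ) = 2 * Real.pi * Complex.I := by
      rw [hlogt]
      push_cast
      have hmC : (m:ℂ) ≠ 0 := Nat.cast_ne_zero.mpr hm.ne'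
      field_simp
      linear_combination hlog
    have htcpow : (t:ℂ)^(-k) = 1 := by
      rw [stmt6_cpow k htpos, hklogt, Complex.exp_two_pi_mul_I]
    -- square root of t
    set s : ℝ := t ^ ((2:ℝ)⁻¹) with hs
    have hspos : 0 < s := Real.rpow_pos_of_pos htpos _
    have hss : s * s = t := by
      rw [hs, ← Real.rpow_add htpos]
      norm_num
    have hscpow : (s:ℂ)^(-k) = -1 := by
      rw [stmt6_cpow k hspos, hs, Real.log_rpow htpos]
      push_cast
      rw [show -k * ((2:ℂ)⁻¹ * (Real.log t : ℂ)) = (-k * (Real.log t:ℂ)) / 2 by ring,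
        hklogt]
      rw [show (2 * (Real.pi:ℂ) * Complex.I) / 2 = Real.pi * Complex.I by ring]
      exact Complex.exp_pi_mul_I
    have hgt : g t = 0 := by
      have := hG s hspos s hspos
      rw [hss, hscpow] at this
      simpa using this
    have hgtn : ∀ n : ℕ, g (t ^ n) = 0 := by
      intro n
      induction n with
      | zero => simpa using hg1
      | succ n ih =>
        have := hG (t ^ n) (pow_pos htpos n) t htpos
        rw [← pow_succ] at this
        rw [this, ih, hgt, smul_zero, zero_add]
    have hltm : l = t ^ m := by
      rw [ht, ← Real.rpow_natCast (l ^ ((m:ℝ)⁻¹)) m, ← Real.rpow_mul hl.le,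
        inv_mul_cancel₀ hmR, Real.rpow_one]
    rw [hltm]; exact hgtn m
  -- inverse relation
  have hinvcpow : ∀ l > (0:ℝ), ((l⁻¹ : ℝ) : ℂ)^(-k) = ((l:ℂ)^(-k))⁻¹ := by
    intro l hl
    rw [stmt6_cpow k (inv_pos.mpr hl), stmt6_cpow k hl, Real.log_inv]
    rw [← Complex.exp_neg]
    congr 1
    push_cast
    ring
  have hginv : ∀ l > (0:ℝ), ((l:ℂ)^(-k)) = 1 → g l = - g l⁻¹ := by
    intro l hl hcp
    have := hG l hl l⁻¹ (inv_pos.mpr hl)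
    rw [mul_inv_cancel₀ hl.ne', hg1, hinvcpow l hl, hcp, inv_one, one_smul] at this
    have h0 : g l + g l⁻¹ = 0 := this.symm
    exact eq_neg_of_add_eq_zero_left h0
  -- full vanishing lemma
  have hvan : ∀ l > (0:ℝ), ((l:ℂ)^(-k)) = 1 → g l = 0 := by
    intro l hl hcp
    have hexp : Complex.exp (-k * Real.log l) = 1 := by
      rw [← stmt6_cpow k hl]; exact hcp
    obtain ⟨m, hm⟩ := Complex.exp_eq_one_iff.mp hexp
    rcases lt_trichotomy m 0 with hmlt | hmeq | hmgt
    · -- use inverse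
      have hlinv : (0:ℝ) < l⁻¹ := inv_pos.mpr hl
      have hmlog : -k * (Real.log l⁻¹ : ℂ) = ((-m).toNat : ℂ) * (2 * Real.pi * Complex.I) := by
        rw [Real.log_inv,
          show (((-m).toNat : ℂ)) = -(m:ℂ) by
            exact_mod_cast (Int.toNat_of_nonneg (by omega : (0:ℤ) ≤ -m))]
        push_cast
        linear_combination -hm
      have h0 : g l⁻¹ = 0 := key (-m).toNat (by omega) l⁻¹ hlinv hmlog
      rw [hginv l hl hcp, h0, neg_zero]
    · -- m = 0 : l = 1
      subst hmeq
      simp only [Int.cast_zero, zero_mul] at hm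
      have : (Real.log l : ℂ) = 0 := by
        rcases mul_eq_zero.mp hm with h | h
        · exact absurd (neg_eq_zero.mp h) hk
        · exact h
      have hlog0 : Real.log l = 0 := by exact_mod_cast this
      have : l = 1 := by
        rcases Real.log_eq_zero.mp hlog0 with h | h | h
        · exact absurd h hl.ne'
        · exact h
        · linarith
      rw [this]; exact hg1
    · have hmlog : -k * (Real.log l : ℂ) = (m.toNat : ℂ) * (2 * Real.pi * Complex.I) := by
        rw [hm]
        congr 2
        exact_mod_cast (Int.toNat_of_nonneg hmgt.le).symm
      exact key m.toNat (by omega) l hl hmlog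
  -- choose l₀ with cpow ≠ 1
  obtain ⟨l₀, hl₀, hc₀⟩ : ∃ l₀ > (0:ℝ), ((l₀:ℂ)^(-k)) ≠ 1 := by
    by_cases h : Complex.exp (-k) = 1
    · obtain ⟨m, hm⟩ := Complex.exp_eq_one_iff.mp h
      have hm0 : m ≠ 0 := by
        rintro rfl
        simp only [Int.cast_zero, zero_mul, neg_eq_zero] at hm
        exact hk hm
      refine ⟨Real.exp ((2 * (m:ℝ))⁻¹), Real.exp_pos _, ?_⟩
      rw [stmt6_cpow k (Real.exp_pos _), Real.log_exp]
      have hmC : (m:ℂ) ≠ 0 := Int.cast_ne_zero.mpr hm0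
      have : -k * ((2 * (m:ℝ))⁻¹ : ℝ) = Real.pi * Complex.I := by
        push_cast
        field_simp
        linear_combination hm
      rw [this, Complex.exp_pi_mul_I]
      norm_num
    · refine ⟨Real.exp 1, Real.exp_pos _, ?_⟩
      rw [stmt6_cpow k (Real.exp_pos _), Real.log_exp]
      push_cast
      rw [mul_one]
      exact h
  set c₀ : ℂ := (l₀:ℂ)^(-k) - 1 with hc0def
  have hc₀ne : c₀ ≠ 0 := sub_ne_zero.mpr hc₀
  refine ⟨c₀⁻¹ • g l₀, ?_, ?_⟩
  · intro l hl
    by_cases hcp : ((l:ℂ)^(-k)) = 1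
    · rw [show φ l 0 = g l from rfl, hvan l hl hcp, hcp]
      simp
    · have h2 : (((l:ℂ)^(-k)) - 1) • (c₀⁻¹ • g l₀) = g l := by
        rw [smul_comm, hsym l₀ hl₀ l hl, smul_smul, inv_mul_cancel₀ hc₀ne, one_smul]
      exact h2.symm
  · intro w hw
    have h1 := hw l₀ hl₀
    have h2 : c₀ • w = c₀ • (c₀⁻¹ • g l₀) := by
      rw [smul_smul, mul_inv_cancel₀ hc₀ne, one_smul]
      exact h1.symm
    exact smul_right_injective V hc₀ne h2
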